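/- Let n ≥ 2 be an integer and w_1, ..., w_n be strictly positive real numbers. There exists a family of non-negative real numbers (α_{ij})_{i≠j, 1≤i,j≤n} satisfying Σ_{j≠i} α_{ij} w_j = w_i for every i and Σ_{i≠j} α_{ij} = 1 for every j, if and only if w_i ≤ Σ_{j≠i} w_j for every i. -/

import Mathlib

open Finset

private lemma fin3_cases (m : Fin 3) : m = 0 ∨ m = 1 ∨ m = 2 := by
  revert m; decide

/-- Construction of the transfer matrix from a 3-coloring whose color classes
each carry at most half the total weight. -/
private lemma construct_aux {n : ℕ} (w : Fin n → ℝ) (hw : ∀ i, 0 < w i)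
    (g : Fin n → Fin 3)
    (hpos : ∀ k, 0 < ∑ i ∈ Finset.univ.filter (fun i => g i = k), w i)
    (hle : ∀ k, 2 * (∑ i ∈ Finset.univ.filter (fun i => g i = k), w i) ≤ ∑ i, w i) :
    ∃ α : Fin n → Fin n → ℝ,
      (∀ i j, i ≠ j → 0 ≤ α i j) ∧
      (∀ i, ∑ j ∈ Finset.univ.erase i, α i j * w j = w i) ∧
      (∀ j, ∑ i ∈ Finset.univ.erase j, α i j = 1) := by
  set σ : Fin 3 → ℝ := fun k => ∑ i ∈ Finset.univ.filter (fun i => g i = k), w i with hσdef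
  have hT : σ 0 + σ 1 + σ 2 = ∑ i, w i := by
    have := Finset.sum_fiberwise (Finset.univ : Finset (Fin n)) g w
    rw [Fin.sum_univ_three (fun k => σ k)] at *
    exact this
  have hσpos : ∀ k, 0 < σ k := hpos
  have hσle : ∀ k, 2 * σ k ≤ σ 0 + σ 1 + σ 2 := by intro k; rw [hT]; exact hle k
  have hσne : ∀ k, σ k ≠ 0 := fun k => ne_of_gt (hσpos k)
  have key : ∀ k l : Fin 3, k ≠ l → (σ 0 + σ 1 + σ 2) / 2 ≤ σ k + σ l := by
    intro k l hkl
    have h0 := hσle 0; have h1 := hσle 1; have h2 := hσle 2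
    rcases fin3_cases k with hk | hk | hk <;> rcases fin3_cases l with hl | hl | hl <;>
      subst hk <;> subst hl <;> first
        | exact absurd rfl hkl
        | linarith
  refine ⟨fun i j => if g i = g j then 0 else
      (σ (g i) + σ (g j) - (σ 0 + σ 1 + σ 2) / 2) * w i / (σ (g i) * σ (g j)), ?_, ?_, ?_⟩
  · -- nonnegativity
    intro i j hij
    dsimp only
    split_ifs with h
    · exact le_rfl
    · apply div_nonneg
      · apply mul_nonneg _ (hw i).le
        have := key (g i) (g j) h
        linarith
      · exact (mul_pos (hσpos _) (hσpos _)).le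
  · -- row sums
    intro i
    rw [Finset.sum_erase _ (by simp)]
    rw [← Finset.sum_fiberwise Finset.univ g
      (fun j => (if g i = g j then 0 else
        (σ (g i) + σ (g j) - (σ 0 + σ 1 + σ 2) / 2) * w i / (σ (g i) * σ (g j))) * w j)]
    have inner : ∀ k : Fin 3,
        (∑ j ∈ Finset.univ.filter (fun j => g j = k),
          (if g i = g j then 0 else
            (σ (g i) + σ (g j) - (σ 0 + σ 1 + σ 2) / 2) * w i / (σ (g i) * σ (g j))) * w j)
        = (if g i = k then 0 else
            (σ (g i) + σ k - (σ 0 + σ 1 + σ 2) / 2) * w i / (σ (g i) * σ k)) * σ k := by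
      intro k
      rw [hσdef]
      dsimp only
      rw [Finset.mul_sum]
      apply Finset.sum_congr rfl
      intro j hj
      rw [(Finset.mem_filter.mp hj).2]
    rw [Fin.sum_univ_three (fun k => ∑ j ∈ Finset.univ.filter (fun j => g j = k), _)]
    rw [inner 0, inner 1, inner 2]
    have h0 := hσne 0; have h1 := hσne 1; have h2 := hσne 2
    rcases fin3_cases (g i) with hk | hk | hk <;> rw [hk] <;>
      simp only [if_pos rfl, if_neg (by decide : ¬ ((0:Fin 3) = 1)),
        if_neg (by decide : ¬ ((0:Fin 3) = 2)), if_neg (by decide : ¬ ((1:Fin 3) = 0)),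
        if_neg (by decide : ¬ ((1:Fin 3) = 2)), if_neg (by decide : ¬ ((2:Fin 3) = 0)),
        if_neg (by decide : ¬ ((2:Fin 3) = 1)), ↓reduceIte] <;>
      field_simp <;> ring
  · -- column sums
    intro j
    rw [Finset.sum_erase _ (by simp)]
    rw [← Finset.sum_fiberwise Finset.univ g
      (fun i => (if g i = g j then 0 else
        (σ (g i) + σ (g j) - (σ 0 + σ 1 + σ 2) / 2) * w i / (σ (g i) * σ (g j))))]
    have inner : ∀ k : Fin 3,
        (∑ i ∈ Finset.univ.filter (fun i => g i = k),
          (if g i = g j then 0 else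
            (σ (g i) + σ (g j) - (σ 0 + σ 1 + σ 2) / 2) * w i / (σ (g i) * σ (g j))))
        = (if k = g j then 0 else
            (σ k + σ (g j) - (σ 0 + σ 1 + σ 2) / 2) / (σ k * σ (g j))) * σ k := by
      intro k
      rw [hσdef]
      dsimp only
      rw [Finset.mul_sum]
      apply Finset.sum_congr rfl
      intro i hi
      rw [(Finset.mem_filter.mp hi).2]
      split_ifs <;> ring
    rw [Fin.sum_univ_three (fun k => ∑ i ∈ Finset.univ.filter (fun i => g i = k), _)]
    rw [inner 0, inner 1, inner 2]
    have h0 := hσne 0; have h1 := hσne 1; have h2 := hσne 2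
    rcases fin3_cases (g j) with hk | hk | hk <;> rw [hk] <;>
      simp only [if_pos rfl, if_neg (by decide : ¬ ((0:Fin 3) = 1)),
        if_neg (by decide : ¬ ((0:Fin 3) = 2)), if_neg (by decide : ¬ ((1:Fin 3) = 0)),
        if_neg (by decide : ¬ ((1:Fin 3) = 2)), if_neg (by decide : ¬ ((2:Fin 3) = 0)),
        if_neg (by decide : ¬ ((2:Fin 3) = 1)), ↓reduceIte] <;>
      field_simp <;> ring

/-- Solvability criterion for the fair-transfer linear system: non-negative transfer
fractions with unit column sums and fair row sums exist iff no weight exceeds the sum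
of the other weights. -/
theorem stmt_1 (n : ℕ) (hn : 2 ≤ n) (w : Fin n → ℝ) (hw : ∀ i, 0 < w i) :
    (∃ α : Fin n → Fin n → ℝ,
        (∀ i j, i ≠ j → 0 ≤ α i j) ∧
        (∀ i, ∑ j ∈ Finset.univ.erase i, α i j * w j = w i) ∧
        (∀ j, ∑ i ∈ Finset.univ.erase j, α i j = 1)) ↔
      ∀ i, w i ≤ ∑ j ∈ Finset.univ.erase i, w j := by
  constructor
  · rintro ⟨α, hpos, hrow, hcol⟩ i
    rw [← hrow i]
    refine Finset.sum_le_sum fun j hj => ?_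
    have hji : j ≠ i := (Finset.mem_erase.mp hj).1
    have h1 : α i j ≤ 1 := by
      rw [← hcol j]
      exact Finset.single_le_sum
        (fun k hk => hpos k j (Finset.mem_erase.mp hk).1)
        (Finset.mem_erase.mpr ⟨hji.symm, Finset.mem_univ i⟩)
    nlinarith [(hw j).le, hpos i j hji.symm]
  · intro hcond
    have hS2 : ∀ i, 2 * w i ≤ ∑ j, w j := by
      intro i
      have h := hcond i
      have he : ∑ j ∈ Finset.univ.erase i, w j = (∑ j, w j) - w i :=
        Finset.sum_erase_eq_sub (Finset.mem_univ i)
      linarith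
    rcases eq_or_lt_of_le hn with h2 | h3
    · -- n = 2
      subst h2
      have e0 : (Finset.univ.erase (0 : Fin 2)) = {1} := by decide
      have e1 : (Finset.univ.erase (1 : Fin 2)) = {0} := by decide
      have heq : w 0 = w 1 := by
        have h0 := hcond 0; have h1 := hcond 1
        rw [e0, Finset.sum_singleton] at h0
        rw [e1, Finset.sum_singleton] at h1
        linarith
      refine ⟨fun i j => if i = j then 0 else 1,
        fun i j hij => by simp [hij], ?_, ?_⟩
      · intro i
        rw [Finset.sum_erase _ (by simp)]
        rw [Fin.sum_univ_two]
        fin_cases i <;> simp [heq]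
      · intro j
        rw [Finset.sum_erase _ (by simp)]
        rw [Fin.sum_univ_two]
        fin_cases j <;> simp
    · -- 3 ≤ n
      haveI : Nonempty (Fin n) := ⟨⟨0, by omega⟩⟩
      obtain ⟨i0, -, hi0⟩ := Finset.exists_max_image Finset.univ w Finset.univ_nonempty
      have hi0' : ∀ i, w i ≤ w i0 := fun i => hi0 i (Finset.mem_univ i)
      set R := Finset.univ.erase i0 with hR
      have hcardR : 2 ≤ R.card := by
        rw [hR, Finset.card_erase_of_mem (Finset.mem_univ i0), Finset.card_univ,
          Fintype.card_fin]
        omega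
      set S := ∑ j, w j with hSdef
      have hRsum : ∑ j ∈ R, w j = S - w i0 := Finset.sum_erase_eq_sub (Finset.mem_univ i0)
      set 𝒮 := R.powerset.filter (fun B => B.Nonempty ∧ B ≠ R ∧ 2 * ∑ i ∈ B, w i ≤ S)
        with h𝒮
      have h𝒮ne : 𝒮.Nonempty := by
        obtain ⟨r1, hr1⟩ := Finset.card_pos.mp (by omega : 0 < R.card)
        have hc1 : 0 < (R.erase r1).card := by
          rw [Finset.card_erase_of_mem hr1]; omega
        obtain ⟨r2, hr2⟩ := Finset.card_pos.mp hc1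
        have hr2R : r2 ∈ R := Finset.mem_of_mem_erase hr2
        have hr21 : r2 ≠ r1 := Finset.ne_of_mem_erase hr2
        refine ⟨{r1}, ?_⟩
        rw [h𝒮, Finset.mem_filter, Finset.mem_powerset]
        refine ⟨Finset.singleton_subset_iff.mpr hr1, Finset.singleton_nonempty r1, ?_, ?_⟩
        · intro h
          rw [← h] at hr2R
          exact hr21 (Finset.mem_singleton.mp hr2R)
        · rw [Finset.sum_singleton]
          have ha := hi0' r1
          have hb := hS2 i0
          linarith
      obtain ⟨B, hB𝒮, hBmax⟩ := Finset.exists_max_image 𝒮 (fun B => ∑ i ∈ B, w i) h𝒮ne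
      rw [h𝒮, Finset.mem_filter, Finset.mem_powerset] at hB𝒮
      obtain ⟨hBsub, hBne, hBneR, hBle⟩ := hB𝒮
      have hi0B : i0 ∉ B := fun h => Finset.ne_of_mem_erase (hBsub h) rfl
      set C := R \ B with hC
      have hCsub : C ⊆ R := Finset.sdiff_subset
      have hCne : C.Nonempty := by
        rw [hC, Finset.sdiff_nonempty]
        intro hRB
        exact hBneR (Finset.Subset.antisymm hBsub hRB)
      have hsplit : ∑ i ∈ C, w i + ∑ i ∈ B, w i = S - w i0 := by
        rw [hC, ← hRsum]
        exact Finset.sum_sdiff hBsub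
      have hCle : 2 * ∑ i ∈ C, w i ≤ S := by
        by_contra hc
        push_neg at hc
        obtain ⟨j, hj⟩ := hCne
        have hjR : j ∈ R := hCsub hj
        have hjB : j ∉ B := (Finset.mem_sdiff.mp hj).2
        have hCnj : C ≠ {j} := by
          intro h
          rw [h, Finset.sum_singleton] at hc
          have ha := hi0' j
          have hb := hS2 i0
          linarith
        obtain ⟨j', hj', hjj'⟩ : ∃ j' ∈ C, j' ≠ j := by
          by_contra h
          push_neg at h
          exact hCnj (Finset.eq_singleton_iff_unique_mem.mpr ⟨hj, fun x hx => h x hx⟩)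
        have hkey : 2 * (∑ i ∈ B, w i + w j) ≤ S := by
          have h1 := hi0' j
          linarith
        have hB' : insert j B ∈ 𝒮 := by
          rw [h𝒮, Finset.mem_filter, Finset.mem_powerset]
          refine ⟨Finset.insert_subset_iff.mpr ⟨hjR, hBsub⟩,
            Finset.insert_nonempty _ _, ?_, ?_⟩
          · intro h
            have hmem : j' ∈ insert j B := by rw [h]; exact hCsub hj'
            rcases Finset.mem_insert.mp hmem with h' | h'
            · exact hjj' h'
            · exact (Finset.mem_sdiff.mp hj').2 h'
          · rw [Finset.sum_insert hjB]; linarith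
        have hle := hBmax _ hB'
        rw [Finset.sum_insert hjB] at hle
        linarith [hw j]
      set g : Fin n → Fin 3 := fun i => if i = i0 then 0 else if i ∈ B then 1 else 2
        with hg
      have f0 : Finset.univ.filter (fun i => g i = 0) = {i0} := by
        ext x
        simp only [Finset.mem_filter, Finset.mem_univ, true_and, Finset.mem_singleton, hg]
        split_ifs with hx hb
        · simp [hx]
        · simp [hx, show ((1 : Fin 3) ≠ 0) by decide]
        · simp [hx, show ((2 : Fin 3) ≠ 0) by decide]
      have f1 : Finset.univ.filter (fun i => g i = 1) = B := by
        ext x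
        simp only [Finset.mem_filter, Finset.mem_univ, true_and, hg]
        split_ifs with hx hb
        · subst hx
          simp [show ((0 : Fin 3) ≠ 1) by decide, hi0B]
        · simp [hb]
        · simp [hb, show ((2 : Fin 3) ≠ 1) by decide]
      have f2 : Finset.univ.filter (fun i => g i = 2) = C := by
        ext x
        simp only [Finset.mem_filter, Finset.mem_univ, true_and, hg, hC, hR,
          Finset.mem_sdiff, Finset.mem_erase]
        split_ifs with hx hb
        · subst hx
          simp [show ((0 : Fin 3) ≠ 2) by decide, hi0B]
        · simp [hb, show ((1 : Fin 3) ≠ 2) by decide]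
        · simp [hx, hb]
      apply construct_aux w hw g
      · intro k
        rcases fin3_cases k with hk | hk | hk <;> subst hk
        · rw [f0, Finset.sum_singleton]; exact hw i0
        · rw [f1]; exact Finset.sum_pos (fun i _ => hw i) hBne
        · rw [f2]; exact Finset.sum_pos (fun i _ => hw i) hCne
      · intro k
        rcases fin3_cases k with hk | hk | hk <;> subst hk
        · rw [f0, Finset.sum_singleton]; exact hS2 i0
        · rw [f1]; exact hBle
        · rw [f2]; exact hCle
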